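/- Let I, J ∈ ℝ with I > J + d/2 and m ∈ ℕ. Then every bounded symmetric m-linear functional A on H_J(T^d) restricts to a Hilbert–Schmidt m-linear functional on H_I(T^d) with ‖A‖_{HS, H_I} ≤ C_{I-J,m} ‖A‖_{L_m(H_J)}, where the Hilbert–Schmidt norm is ‖A‖²_{HS,H_I} = Σ_{k₁,...,k_m} Π_j (1+|k_j|²)^{-I} |A[ς̃_{k₁},...,ς̃_{k_m}]|². -/

import Mathlib

open scoped BigOperators

noncomputable section

/-- Squared euclidean norm `|k|²` of a lattice vector `k ∈ ℤ^d`. -/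
def latNormSq (d : ℕ) (k : Fin d → ℤ) : ℝ := ∑ j, ((k j : ℝ)) ^ 2

/-- Sobolev weight `(1+|k|²)^J`. -/
def sobWeight (d : ℕ) (J : ℝ) (k : Fin d → ℤ) : ℝ := (1 + latNormSq d k) ^ J

def finConsEquiv (ι : Type*) (m : ℕ) : ι × (Fin m → ι) ≃ (Fin (m + 1) → ι) where
  toFun p := Fin.cons p.1 p.2
  invFun k := (k 0, fun j => k j.succ)
  left_inv p := by simp
  right_inv k := by
    funext j
    exact Fin.cases rfl (fun i => rfl) j

lemma tsum_pi_prod {ι : Type*} (g : ι → ENNReal) (m : ℕ) :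
    ∑' k : Fin m → ι, ∏ j, g (k j) = (∑' n, g n) ^ m := by
  induction m with
  | zero => rw [tsum_fintype]; simp
  | succ m ih =>
    rw [← (finConsEquiv ι m).tsum_eq]
    have hterm : ∀ p : ι × (Fin m → ι),
        ∏ j, g (finConsEquiv ι m p j) = g p.1 * ∏ j, g (p.2 j) := by
      intro p
      simp [finConsEquiv, Fin.prod_univ_succ]
    rw [tsum_congr hterm, ENNReal.tsum_prod']
    simp_rw [ENNReal.tsum_mul_left, ih, ENNReal.tsum_mul_right, pow_succ']

lemma summable_one_add_sq_int (s : ℝ) (hs : 1 / 2 < s) :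
    Summable (fun n : ℤ => (1 + (n : ℝ) ^ 2) ^ (-s)) := by
  have hnat : Summable (fun n : ℕ => (1 + (n : ℝ) ^ 2) ^ (-s)) := by
    have h1 : Summable (fun n : ℕ => ((n : ℝ)) ^ (-(2 * s))) :=
      Real.summable_nat_rpow.mpr (by linarith)
    have h2 : Summable (fun n : ℕ => (((n + 1 : ℕ) : ℝ)) ^ (-(2 * s))) :=
      (summable_nat_add_iff 1).mpr h1
    apply Summable.of_nonneg_of_le (fun n => Real.rpow_nonneg (by positivity) _)
      (fun n => ?_) (h2.mul_left ((2 : ℝ) ^ s))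
    have hb : ((n + 1 : ℕ) : ℝ) ^ 2 / 2 ≤ 1 + (n : ℝ) ^ 2 := by
      push_cast; nlinarith [sq_nonneg ((n : ℝ) - 1)]
    calc (1 + (n : ℝ) ^ 2) ^ (-s) ≤ (((n + 1 : ℕ) : ℝ) ^ 2 / 2) ^ (-s) :=
          Real.rpow_le_rpow_of_nonpos (by positivity) hb (by linarith)
      _ = (2 : ℝ) ^ s * (((n + 1 : ℕ) : ℝ)) ^ (-(2 * s)) := by
          rw [Real.div_rpow (by positivity) (by norm_num),
            ← Real.rpow_natCast (((n + 1 : ℕ) : ℝ)) 2, ← Real.rpow_mul (by positivity),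
            Real.rpow_neg (by norm_num : (0:ℝ) ≤ 2), div_inv_eq_mul, mul_comm]
          push_cast
          ring_nf
  apply Summable.of_nat_of_neg <;> simpa using hnat

lemma latNormSq_nonneg (d : ℕ) (k : Fin d → ℤ) : 0 ≤ latNormSq d k :=
  Finset.sum_nonneg fun j _ => sq_nonneg _

lemma one_add_latNormSq_pos (d : ℕ) (k : Fin d → ℤ) : 0 < 1 + latNormSq d k := by
  have := latNormSq_nonneg d k; linarith

lemma tsum_weight_ne_top (d : ℕ) (s : ℝ) (hs : (d : ℝ) / 2 < s) :
    ∑' k : Fin d → ℤ, ENNReal.ofReal ((1 + latNormSq d k) ^ (-s)) ≠ ⊤ := by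
  rcases Nat.eq_zero_or_pos d with hd | hd
  · subst hd
    rw [tsum_fintype]
    exact (ENNReal.sum_lt_top.2 fun _ _ => ENNReal.ofReal_lt_top).ne
  · have hdR : (0 : ℝ) < d := by exact_mod_cast hd
    have hsd : 1 / 2 < s / d := by
      rw [lt_div_iff₀ hdR]
      calc (1 : ℝ) / 2 * d = d / 2 := by ring
        _ < s := hs
    -- pointwise bound
    have key : ∀ k : Fin d → ℤ,
        ENNReal.ofReal ((1 + latNormSq d k) ^ (-s)) ≤
          ∏ j, ENNReal.ofReal ((1 + ((k j : ℝ)) ^ 2) ^ (-(s / d))) := by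
      intro k
      rw [← ENNReal.ofReal_prod_of_nonneg (fun j _ => Real.rpow_nonneg (by positivity) _)]
      apply ENNReal.ofReal_le_ofReal
      have hprod : ∏ j, (1 + ((k j : ℝ)) ^ 2) ^ (-(s / d))
          = (∏ j, (1 + ((k j : ℝ)) ^ 2)) ^ (-(s / d)) :=
        (Real.finset_prod_rpow _ _ (fun j _ => add_nonneg zero_le_one (sq_nonneg _)) _)
      rw [hprod]
      have hP : (0 : ℝ) < ∏ j, (1 + ((k j : ℝ)) ^ 2) :=
        Finset.prod_pos fun j _ => by positivity
      have hPle : ∏ j, (1 + ((k j : ℝ)) ^ 2) ≤ (1 + latNormSq d k) ^ d := by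
        have := Finset.prod_le_prod (s := Finset.univ)
          (f := fun j : Fin d => 1 + ((k j : ℝ)) ^ 2)
          (g := fun _ : Fin d => 1 + latNormSq d k)
          (fun j _ => by positivity)
          (fun j _ => by
            have : ((k j : ℝ)) ^ 2 ≤ latNormSq d k :=
              Finset.single_le_sum (f := fun i => ((k i : ℝ)) ^ 2)
                (fun i _ => sq_nonneg _) (Finset.mem_univ j)
            show 1 + ((k j : ℝ)) ^ 2 ≤ 1 + latNormSq d k
            linarith)
        simpa using this
      calc (1 + latNormSq d k) ^ (-s)
          = ((1 + latNormSq d k) ^ (d : ℕ)) ^ (-(s / d)) := by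
            rw [← Real.rpow_natCast (1 + latNormSq d k) d,
              ← Real.rpow_mul (one_add_latNormSq_pos d k).le]
            congr 1
            field_simp
        _ ≤ (∏ j, (1 + ((k j : ℝ)) ^ 2)) ^ (-(s / d)) :=
            Real.rpow_le_rpow_of_nonpos hP hPle (by
              have : (0:ℝ) < s / d := lt_trans (by norm_num) hsd
              linarith)
    -- summability of the 1-d factor in ENNReal
    have h1d : ∑' n : ℤ, ENNReal.ofReal ((1 + (n : ℝ) ^ 2) ^ (-(s / d))) ≠ ⊤ := by
      have hsum := summable_one_add_sq_int (s / d) hsd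
      have : (fun n : ℤ => ENNReal.ofReal ((1 + (n : ℝ) ^ 2) ^ (-(s / d))))
          = fun n : ℤ => (((1 + (n : ℝ) ^ 2) ^ (-(s / d))).toNNReal : ENNReal) := by
        funext n; rfl
      rw [this]
      exact ENNReal.tsum_coe_ne_top_iff_summable.mpr hsum.toNNReal
    have hfin : ∑' k : Fin d → ℤ, ENNReal.ofReal ((1 + latNormSq d k) ^ (-s)) < ⊤ :=
      calc ∑' k : Fin d → ℤ, ENNReal.ofReal ((1 + latNormSq d k) ^ (-s))
          ≤ ∑' k : Fin d → ℤ, ∏ j, ENNReal.ofReal ((1 + ((k j : ℝ)) ^ 2) ^ (-(s / d))) :=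
            ENNReal.tsum_le_tsum key
        _ = (∑' n : ℤ, ENNReal.ofReal ((1 + (n : ℝ) ^ 2) ^ (-(s / d)))) ^ d :=
            tsum_pi_prod (fun n : ℤ => ENNReal.ofReal ((1 + (n : ℝ) ^ 2) ^ (-(s / d)))) d
        _ < ⊤ := ENNReal.pow_lt_top (lt_of_le_of_ne le_top h1d)
    exact hfin.ne

/-- Let `I > J + d/2`.  Every bounded symmetric `m`-linear functional `A` on
`H_J(T^d)` — represented by its array of values `a k = A[ς̃_{k₁},…,ς̃_{k_m}]` on the
basis, which by boundedness satisfies `|a k| ≤ ‖A‖ ∏_j (1+|k_j|²)^{J/2}` — restricts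
to a Hilbert–Schmidt `m`-linear functional on `H_I(T^d)` with
`‖A‖_{HS,H_I} ≤ C_{I-J,m} ‖A‖_{L_m(H_J)}`, where
`‖A‖²_{HS,H_I} = Σ_k ∏_j (1+|k_j|²)^{-I} |a k|²` and the constant depends only on
`I - J`, `m` (and `d`). -/
theorem multilinear_hilbert_schmidt_embedding (d m : ℕ) :
    ∃ C : ℝ → ℝ, (∀ δ : ℝ, 0 < C δ) ∧
      ∀ (I J : ℝ), I > J + (d : ℝ) / 2 →
        ∀ (a : (Fin m → (Fin d → ℤ)) → ℝ) (Nrm : ℝ),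
          (∀ k, |a k| ≤ Nrm * ∏ j, (1 + latNormSq d (k j)) ^ (J / 2)) →
          Summable (fun k : Fin m → (Fin d → ℤ) =>
            (∏ j, sobWeight d (-I) (k j)) * (a k) ^ 2) ∧
          Real.sqrt (∑' k : Fin m → (Fin d → ℤ),
              (∏ j, sobWeight d (-I) (k j)) * (a k) ^ 2)
            ≤ C (I - J) * Nrm := by
  classical
  refine ⟨fun δ => max 1 (Real.sqrt
      ((∑' k : Fin d → ℤ, ENNReal.ofReal ((1 + latNormSq d k) ^ (-δ))).toReal ^ m)),
    fun δ => lt_of_lt_of_le one_pos (le_max_left _ _), ?_⟩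
  intro I J hIJ a Nrm ha
  set δ := I - J with hδdef
  have hδ : (d : ℝ) / 2 < δ := by rw [hδdef]; linarith
  -- nonnegativity of Nrm
  have hNrm : 0 ≤ Nrm := by
    have hk := ha (fun _ _ => 0)
    have hP : 0 < ∏ j : Fin m,
        (1 + latNormSq d ((fun (_ : Fin m) (_ : Fin d) => (0 : ℤ)) j)) ^ (J / 2) :=
      Finset.prod_pos fun j _ => Real.rpow_pos_of_pos (one_add_latNormSq_pos _ _) _
    by_contra h'
    push_neg at h'
    have hneg := mul_neg_of_neg_of_pos h' hP
    have h0 := abs_nonneg (a (fun _ _ => 0))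
    linarith
  set g : (Fin d → ℤ) → ENNReal := fun k => ENNReal.ofReal ((1 + latNormSq d k) ^ (-δ))
    with hg
  have hG : ∑' k, g k ≠ ⊤ := tsum_weight_ne_top d δ hδ
  set F : (Fin m → (Fin d → ℤ)) → ℝ :=
    fun k => (∏ j, sobWeight d (-I) (k j)) * (a k) ^ 2 with hFdef
  have hF0 : ∀ k, 0 ≤ F k := fun k =>
    mul_nonneg (Finset.prod_nonneg fun j _ =>
      Real.rpow_nonneg (one_add_latNormSq_pos d _).le _) (sq_nonneg _)
  -- pointwise real bound
  have hFle : ∀ k, F k ≤ Nrm ^ 2 * ∏ j, (1 + latNormSq d (k j)) ^ (-δ) := by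
    intro k
    have h1 : (a k) ^ 2 ≤ Nrm ^ 2 * ∏ j, (1 + latNormSq d (k j)) ^ J := by
      have h2 : (a k) ^ 2 ≤ (Nrm * ∏ j, (1 + latNormSq d (k j)) ^ (J / 2)) ^ 2 := by
        rw [← sq_abs]
        exact pow_le_pow_left₀ (abs_nonneg _) (ha k) 2
      calc (a k) ^ 2 ≤ _ := h2
        _ = Nrm ^ 2 * ∏ j, (1 + latNormSq d (k j)) ^ J := by
            rw [mul_pow, ← Finset.prod_pow]
            congr 1
            refine Finset.prod_congr rfl fun j _ => ?_
            rw [← Real.rpow_natCast ((1 + latNormSq d (k j)) ^ (J / 2)) 2,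
              ← Real.rpow_mul (one_add_latNormSq_pos d (k j)).le]
            norm_num
    have hprodnn : 0 ≤ ∏ j, sobWeight d (-I) (k j) :=
      Finset.prod_nonneg fun j _ => Real.rpow_nonneg (one_add_latNormSq_pos d _).le _
    calc F k ≤ (∏ j, sobWeight d (-I) (k j)) *
          (Nrm ^ 2 * ∏ j, (1 + latNormSq d (k j)) ^ J) :=
          mul_le_mul_of_nonneg_left h1 hprodnn
      _ = Nrm ^ 2 * ∏ j, ((1 + latNormSq d (k j)) ^ (-I) * (1 + latNormSq d (k j)) ^ J) := by
          rw [Finset.prod_mul_distrib]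
          simp only [sobWeight]
          ring
      _ = Nrm ^ 2 * ∏ j, (1 + latNormSq d (k j)) ^ (-δ) := by
          congr 1
          refine Finset.prod_congr rfl fun j _ => ?_
          rw [← Real.rpow_add (one_add_latNormSq_pos d (k j))]
          congr 1
          rw [hδdef]; ring
  -- ENNReal bound
  have hkey : ∀ k, ENNReal.ofReal (F k) ≤ ENNReal.ofReal (Nrm ^ 2) * ∏ j, g (k j) := by
    intro k
    calc ENNReal.ofReal (F k)
        ≤ ENNReal.ofReal (Nrm ^ 2 * ∏ j, (1 + latNormSq d (k j)) ^ (-δ)) :=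
          ENNReal.ofReal_le_ofReal (hFle k)
      _ = ENNReal.ofReal (Nrm ^ 2) * ∏ j, g (k j) := by
          rw [ENNReal.ofReal_mul (sq_nonneg Nrm),
            ENNReal.ofReal_prod_of_nonneg fun j _ =>
              Real.rpow_nonneg (one_add_latNormSq_pos d _).le _]
  have hTle : ∑' k, ENNReal.ofReal (F k) ≤ ENNReal.ofReal (Nrm ^ 2) * (∑' n, g n) ^ m :=
    calc ∑' k, ENNReal.ofReal (F k)
        ≤ ∑' k : Fin m → (Fin d → ℤ), ENNReal.ofReal (Nrm ^ 2) * ∏ j, g (k j) :=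
          ENNReal.tsum_le_tsum hkey
      _ = ENNReal.ofReal (Nrm ^ 2) * ∑' k : Fin m → (Fin d → ℤ), ∏ j, g (k j) :=
          ENNReal.tsum_mul_left
      _ = ENNReal.ofReal (Nrm ^ 2) * (∑' n, g n) ^ m := by rw [tsum_pi_prod g m]
  have hB : ENNReal.ofReal (Nrm ^ 2) * (∑' n, g n) ^ m ≠ ⊤ :=
    ENNReal.mul_ne_top ENNReal.ofReal_ne_top (ENNReal.pow_ne_top hG)
  have hT : ∑' k, ENNReal.ofReal (F k) ≠ ⊤ := ne_top_of_le_ne_top hB hTle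
  have hsummable : Summable F := by
    have h1 : ∑' k, ((F k).toNNReal : ENNReal) ≠ ⊤ := hT
    have hs := ENNReal.tsum_coe_ne_top_iff_summable.mp h1
    have h2 : (fun k => ((F k).toNNReal : ℝ)) = F :=
      funext fun k => Real.coe_toNNReal _ (hF0 k)
    rw [← h2]
    exact NNReal.summable_coe.mpr hs
  refine ⟨hsummable, ?_⟩
  have heq : ENNReal.ofReal (∑' k, F k) = ∑' k, ENNReal.ofReal (F k) :=
    ENNReal.ofReal_tsum_of_nonneg hF0 hsummable
  set S : ℝ := (∑' n, g n).toReal with hS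
  have hbound : ∑' k, F k ≤ Nrm ^ 2 * S ^ m := by
    have h1 : ENNReal.ofReal (∑' k, F k) ≤ ENNReal.ofReal (Nrm ^ 2) * (∑' n, g n) ^ m := by
      rw [heq]; exact hTle
    have h2 := ENNReal.toReal_mono hB h1
    rw [ENNReal.toReal_ofReal (tsum_nonneg hF0), ENNReal.toReal_mul, ENNReal.toReal_pow,
      ENNReal.toReal_ofReal (sq_nonneg Nrm)] at h2
    exact h2
  have hsqrtS : 0 ≤ Real.sqrt (S ^ m) := Real.sqrt_nonneg _
  calc Real.sqrt (∑' k, F k) ≤ Real.sqrt (Nrm ^ 2 * S ^ m) := Real.sqrt_le_sqrt hbound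
    _ = Nrm * Real.sqrt (S ^ m) := by
        rw [Real.sqrt_mul (sq_nonneg Nrm), Real.sqrt_sq hNrm]
    _ ≤ max 1 (Real.sqrt (S ^ m)) * Nrm := by
        rw [mul_comm]
        exact mul_le_mul_of_nonneg_right (le_max_right _ _) hNrm

end
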